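/- The graph G consisting of two copies of K₄ intersecting in a single vertex x, with u in one copy and v in the other (u, v, x distinct), is uv-tight: it is uv-sparse and has exactly 2|V| − 2 = 12 edges on its 7 vertices. -/

import Mathlib

open scoped Classical

/-- Number of edges of `G` induced by the vertex set `U`. -/
noncomputable def iG {V : Type*} [Fintype V] (G : SimpleGraph V) (U : Finset V) : ℕ :=
  (G.edgeFinset.filter (fun e => ∀ x ∈ e, x ∈ U)).card

/-- The value `val(U) = 2|U| - t_U`. -/
noncomputable def valU {V : Type*} [DecidableEq V] (u v : V) (U : Finset V) : ℤ :=
  2 * U.card - (if U = {u, v} then 4 else if U.card = 2 ∨ U.card = 3 then 3 else 2)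

/-- A family of vertex sets is `uv`-compatible if each member contains `u` and `v`
and has at least three vertices. -/
def UVCompatible {V : Type*} (u v : V) (𝒳 : Finset (Finset V)) : Prop :=
  𝒳.Nonempty ∧ ∀ A ∈ 𝒳, u ∈ A ∧ v ∈ A ∧ 3 ≤ A.card

/-- The value of a `uv`-compatible family. -/
noncomputable def valFam {V : Type*} [DecidableEq V] (u v : V) (𝒳 : Finset (Finset V)) : ℤ :=
  (∑ A ∈ 𝒳, valU u v A) - 2 * ((𝒳.card : ℤ) - 1)

/-- The number of edges of `G` covered by a family of vertex sets. -/
noncomputable def iFam {V : Type*} [Fintype V] (G : SimpleGraph V) (𝒳 : Finset (Finset V)) : ℕ :=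
  (𝒳.biUnion (fun A => G.edgeFinset.filter (fun e => ∀ x ∈ e, x ∈ A))).card

/-- `G` is `uv`-sparse. -/
noncomputable def UVSparse {V : Type*} [Fintype V] [DecidableEq V]
    (G : SimpleGraph V) (u v : V) : Prop :=
  (∀ U : Finset V, 2 ≤ U.card → (iG G U : ℤ) ≤ valU u v U) ∧
  (∀ 𝒳 : Finset (Finset V), UVCompatible u v 𝒳 → (iFam G 𝒳 : ℤ) ≤ valFam u v 𝒳)

/-- `G` is `(2,2)`-sparse. -/
def Sparse22 {V : Type*} [Fintype V] (G : SimpleGraph V) : Prop :=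
  ∀ U : Finset V, 2 ≤ U.card → (iG G U : ℤ) ≤ 2 * U.card - 2

/-! ### Auxiliary computable machinery -/

/-- The explicit edge set of the two-K₄ graph. -/
def twoK4Edges : Finset (Sym2 (Fin 7)) :=
  {s(0,1), s(0,2), s(0,3), s(1,2), s(1,3), s(2,3), s(0,4), s(0,5), s(0,6), s(4,5), s(4,6), s(5,6)}

/-- Computable version of the induced edge count. -/
def covE (A : Finset (Fin 7)) : Finset (Sym2 (Fin 7)) := twoK4Edges.filter (· ∈ A.sym2)

/-- The two-K₄ graph. -/
def twoK4 : SimpleGraph (Fin 7) := SimpleGraph.fromRel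
  (fun i j => ({i, j} : Set (Fin 7)) ⊆ {0, 1, 2, 3} ∨
              ({i, j} : Set (Fin 7)) ⊆ {0, 4, 5, 6})

lemma twoK4_edgeFinset : twoK4.edgeFinset = twoK4Edges := by
  ext e
  induction e with
  | _ a b =>
    rw [SimpleGraph.mem_edgeFinset, SimpleGraph.mem_edgeSet]
    show twoK4.Adj a b ↔ _
    rw [twoK4.eq_def, SimpleGraph.fromRel_adj]
    simp only [Set.subset_def, Set.mem_insert_iff, Set.mem_singleton_iff]
    fin_cases a <;> fin_cases b <;> decide

lemma iG_twoK4 (U : Finset (Fin 7)) : iG twoK4 U = (covE U).card := by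
  unfold iG covE
  rw [twoK4_edgeFinset]
  congr 1
  ext e
  simp [Finset.mem_filter, Finset.mem_sym2_iff]

lemma iFam_twoK4 (𝒳 : Finset (Finset (Fin 7))) :
    iFam twoK4 𝒳 = (𝒳.biUnion covE).card := by
  unfold iFam
  congr 1
  ext e
  simp only [Finset.mem_biUnion, Finset.mem_filter, twoK4_edgeFinset, covE,
    Finset.mem_sym2_iff]

set_option maxRecDepth 10000 in
lemma twoK4_single : ∀ U : Finset (Fin 7), 2 ≤ U.card →
    ((covE U).card : ℤ) ≤ valU 1 4 U := by decide

set_option maxRecDepth 100000 in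
lemma twoK4_pair : ∀ A B : Finset (Fin 7),
    (1 : Fin 7) ∈ A → (4 : Fin 7) ∈ A → 3 ≤ A.card →
    (1 : Fin 7) ∈ B → (4 : Fin 7) ∈ B → 3 ≤ B.card → A ≠ B →
    (((covE A \ covE B).card : ℤ) ≤ valU 1 4 A - 2 ∨
     ((covE B \ covE A).card : ℤ) ≤ valU 1 4 B - 2) := by decide

lemma twoK4_step (𝒳 : Finset (Finset (Fin 7))) (C D : Finset (Fin 7))
    (hC : C ∈ 𝒳) (hD : D ∈ 𝒳) (hne : C ≠ D)
    (hkey : ((covE C \ covE D).card : ℤ) ≤ valU 1 4 C - 2)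
    (IH : (((𝒳.erase C).biUnion covE).card : ℤ) ≤
      (∑ A ∈ 𝒳.erase C, valU 1 4 A) - 2 * (((𝒳.erase C).card : ℤ) - 1)) :
    ((𝒳.biUnion covE).card : ℤ) ≤ (∑ A ∈ 𝒳, valU 1 4 A) - 2 * ((𝒳.card : ℤ) - 1) := by
  have hDe : D ∈ 𝒳.erase C := Finset.mem_erase.mpr ⟨fun h => hne h.symm, hD⟩
  have hsub : 𝒳.biUnion covE ⊆ (covE C \ covE D) ∪ (𝒳.erase C).biUnion covE := by
    intro e he
    rw [Finset.mem_biUnion] at he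
    obtain ⟨A, hA, heA⟩ := he
    by_cases hAC : A = C
    · subst hAC
      by_cases heD : e ∈ covE D
      · exact Finset.mem_union_right _ (Finset.mem_biUnion.mpr ⟨D, hDe, heD⟩)
      · exact Finset.mem_union_left _ (Finset.mem_sdiff.mpr ⟨heA, heD⟩)
    · exact Finset.mem_union_right _
        (Finset.mem_biUnion.mpr ⟨A, Finset.mem_erase.mpr ⟨hAC, hA⟩, heA⟩)
  have hcard : (𝒳.biUnion covE).card ≤
      (covE C \ covE D).card + ((𝒳.erase C).biUnion covE).card :=
    le_trans (Finset.card_le_card hsub) (Finset.card_union_le _ _)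
  have hsum : valU 1 4 C + ∑ A ∈ 𝒳.erase C, valU 1 4 A = ∑ A ∈ 𝒳, valU 1 4 A :=
    Finset.add_sum_erase _ _ hC
  have hcards : (𝒳.erase C).card + 1 = 𝒳.card := Finset.card_erase_add_one hC
  have hcards' : ((𝒳.erase C).card : ℤ) = (𝒳.card : ℤ) - 1 := by
    omega
  have h1 : ((𝒳.biUnion covE).card : ℤ) ≤
      ((covE C \ covE D).card : ℤ) + (((𝒳.erase C).biUnion covE).card : ℤ) := by
    exact_mod_cast hcard
  rw [hcards'] at IH
  linarith [h1, IH, hkey, hsum]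

lemma twoK4_fam : ∀ n (𝒳 : Finset (Finset (Fin 7))), 𝒳.card = n → 𝒳.Nonempty →
    (∀ A ∈ 𝒳, (1 : Fin 7) ∈ A ∧ (4 : Fin 7) ∈ A ∧ 3 ≤ A.card) →
    ((𝒳.biUnion covE).card : ℤ) ≤ (∑ A ∈ 𝒳, valU 1 4 A) - 2 * ((𝒳.card : ℤ) - 1) := by
  intro n
  induction n with
  | zero =>
    intro 𝒳 hc hne _
    rw [Finset.card_eq_zero] at hc
    exact absurd hc (Finset.nonempty_iff_ne_empty.mp hne)
  | succ n IH =>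
    intro 𝒳 hc hne hmem
    by_cases h1 : 𝒳.card ≤ 1
    · -- singleton case
      obtain ⟨A, hA⟩ := Finset.card_eq_one.mp (le_antisymm h1 (Finset.Nonempty.card_pos hne))
      subst hA
      rw [Finset.singleton_biUnion, Finset.sum_singleton, Finset.card_singleton]
      have := twoK4_single A (le_trans (by norm_num) (hmem A (Finset.mem_singleton_self A)).2.2)
      push_cast
      linarith
    · push_neg at h1
      obtain ⟨C, hC, D, hD, hCD⟩ := Finset.one_lt_card.mp h1
      obtain ⟨hC1, hC4, hC3⟩ := hmem C hC
      obtain ⟨hD1, hD4, hD3⟩ := hmem D hD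
      have herase : ∀ E F : Finset (Fin 7), E ∈ 𝒳 → F ∈ 𝒳 → E ≠ F →
          ((covE E \ covE F).card : ℤ) ≤ valU 1 4 E - 2 →
          ((𝒳.biUnion covE).card : ℤ) ≤ (∑ A ∈ 𝒳, valU 1 4 A) - 2 * ((𝒳.card : ℤ) - 1) := by
        intro E F hE hF hEF hkey
        refine twoK4_step 𝒳 E F hE hF hEF hkey ?_
        refine IH (𝒳.erase E) ?_ ?_ ?_
        · rw [Finset.card_erase_of_mem hE, hc]; omega
        · exact ⟨F, Finset.mem_erase.mpr ⟨fun h => hEF h.symm, hF⟩⟩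
        · exact fun A hA => hmem A (Finset.mem_of_mem_erase hA)
      rcases twoK4_pair C D hC1 hC4 hC3 hD1 hD4 hD3 hCD with hk | hk
      · exact herase C D hC hD hCD hk
      · exact herase D C hD hC (Ne.symm hCD) hk

/-- The graph consisting of two copies of `K₄` meeting in a single vertex `x = 0`,
with `u = 1` in one copy and `v = 4` in the other, is `uv`-tight: it is `uv`-sparse
with exactly `2|V| - 2 = 12` edges on its 7 vertices. -/
theorem two_K4_sharing_vertex_uv_tight :
    let G : SimpleGraph (Fin 7) := SimpleGraph.fromRel
      (fun i j => ({i, j} : Set (Fin 7)) ⊆ {0, 1, 2, 3} ∨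
                  ({i, j} : Set (Fin 7)) ⊆ {0, 4, 5, 6})
    UVSparse G (1 : Fin 7) (4 : Fin 7) ∧
      G.edgeFinset.card = 2 * Fintype.card (Fin 7) - 2 ∧
      G.edgeFinset.card = 12 := by
  intro G
  have hG : G = twoK4 := rfl
  suffices h : UVSparse twoK4 1 4 ∧ twoK4.edgeFinset.card = 2 * Fintype.card (Fin 7) - 2 ∧
      twoK4.edgeFinset.card = 12 by convert h
  have hcard12 : twoK4.edgeFinset.card = 12 := by
    rw [twoK4_edgeFinset]; decide
  refine ⟨⟨?_, ?_⟩, ?_, hcard12⟩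
  · intro U hU
    rw [iG_twoK4]
    exact twoK4_single U hU
  · rintro 𝒳 ⟨hne, hmem⟩
    rw [iFam_twoK4]
    unfold valFam
    exact twoK4_fam 𝒳.card 𝒳 rfl hne hmem
  · rw [hcard12]
    simp
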